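/- Let χ ∈ [0,1) and u_tw(z) = ((1−χ)z + 1)e^{−z} for z > 0. Then for all z > 0, (u_tw''/u_tw')'(z) = −((χ−1)/((1−χ)z + χ))² ≤ 0, and consequently the quantity η''(u_tw(z)) = −(1/u_tw'(z))·(u_tw''/u_tw')'(z) is nonpositive (the profile function η^u is concave on (0,1)). -/

import Mathlib

/-- For χ ∈ [0,1) and u_tw(z) = ((1−χ)z + 1)e^{−z} on z > 0:
(u''/u')'(z) = −((χ−1)/((1−χ)z+χ))² ≤ 0, and η''(u_tw(z)) = −(1/u')·(u''/u')'(z) ≤ 0. -/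
theorem stmt5 (χ : ℝ) (hχ : χ ∈ Set.Ico (0:ℝ) 1)
    (u : ℝ → ℝ) (hu : ∀ z : ℝ, u z = ((1 - χ) * z + 1) * Real.exp (-z)) :
    ∀ z > (0:ℝ),
      deriv (fun y => deriv (deriv u) y / deriv u y) z
          = -((χ - 1) / ((1 - χ) * z + χ))^2 ∧
      deriv (fun y => deriv (deriv u) y / deriv u y) z ≤ 0 ∧
      -(1 / deriv u z) * deriv (fun y => deriv (deriv u) y / deriv u y) z ≤ 0 := by
  obtain ⟨hχ0, hχ1⟩ := hχ
  have hexp : ∀ y : ℝ, HasDerivAt (fun z : ℝ => Real.exp (-z)) (-Real.exp (-y)) y := by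
    intro y
    have h : HasDerivAt (fun z : ℝ => Real.exp (-z)) _ y :=
      (Real.hasDerivAt_exp (-y)).comp y (hasDerivAt_neg y)
    simpa using h
  have hu' : ∀ y : ℝ, HasDerivAt u (-(((1 - χ) * y + χ) * Real.exp (-y))) y := by
    intro y
    have ha : HasDerivAt (fun z : ℝ => (1 - χ) * z + 1) (1 - χ) y := by
      simpa using ((hasDerivAt_id y).const_mul (1 - χ)).add_const 1
    have h1 : HasDerivAt (fun z : ℝ => ((1 - χ) * z + 1) * Real.exp (-z)) _ y := ha.mul (hexp y)
    have hfun : (fun z : ℝ => ((1 - χ) * z + 1) * Real.exp (-z)) = u := by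
      funext z; rw [hu]
    rw [hfun] at h1
    convert h1 using 1; ring
  have hdu : deriv u = fun y => -(((1 - χ) * y + χ) * Real.exp (-y)) :=
    funext fun y => (hu' y).deriv
  have hdu2 : ∀ y : ℝ,
      HasDerivAt (deriv u) (((1 - χ) * y + 2 * χ - 1) * Real.exp (-y)) y := by
    intro y
    rw [hdu]
    have ha : HasDerivAt (fun z : ℝ => (1 - χ) * z + χ) (1 - χ) y := by
      simpa using ((hasDerivAt_id y).const_mul (1 - χ)).add_const χ
    have h1 : HasDerivAt (fun z : ℝ => -(((1 - χ) * z + χ) * Real.exp (-z))) _ y := (ha.mul (hexp y)).neg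
    convert h1 using 1; ring
  have hddu : deriv (deriv u) = fun y => ((1 - χ) * y + 2 * χ - 1) * Real.exp (-y) :=
    funext fun y => (hdu2 y).deriv
  have hratio : (fun y => deriv (deriv u) y / deriv u y)
      = fun y => -(((1 - χ) * y + 2 * χ - 1) / ((1 - χ) * y + χ)) := by
    funext y
    rw [hddu, hdu]
    simp only [div_neg, mul_div_mul_right _ _ (Real.exp_ne_zero (-y))]
  intro z hz
  have hd : (0:ℝ) < (1 - χ) * z + χ := by nlinarith
  have hn : HasDerivAt (fun y : ℝ => (1 - χ) * y + 2 * χ - 1) (1 - χ) z := by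
    simpa using (((hasDerivAt_id z).const_mul (1 - χ)).add_const (2 * χ)).sub_const 1
  have hden : HasDerivAt (fun y : ℝ => (1 - χ) * y + χ) (1 - χ) z := by
    simpa using ((hasDerivAt_id z).const_mul (1 - χ)).add_const χ
  have hq : HasDerivAt (fun y : ℝ => -(((1 - χ) * y + 2 * χ - 1) / ((1 - χ) * y + χ))) _ z :=
    (hn.div hden hd.ne').neg
  have key : deriv (fun y => deriv (deriv u) y / deriv u y) z
      = -((χ - 1) / ((1 - χ) * z + χ)) ^ 2 := by
    rw [hratio, hq.deriv]
    field_simp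
    ring
  refine ⟨key, ?_, ?_⟩
  · rw [key]; exact neg_nonpos.mpr (sq_nonneg _)
  · have h1 : deriv u z < 0 := by
      rw [hdu]
      have := Real.exp_pos (-z)
      simp only
      nlinarith
    have h2 : deriv (fun y => deriv (deriv u) y / deriv u y) z ≤ 0 := by
      rw [key]; exact neg_nonpos.mpr (sq_nonneg _)
    have h3 : (0:ℝ) ≤ -(1 / deriv u z) := by
      rw [neg_nonneg]
      exact le_of_lt (div_neg_of_pos_of_neg one_pos h1)
    exact mul_nonpos_of_nonneg_of_nonpos h3 h2
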